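/- Let k > 0 and φ > 0 be real, let ξ0 ∈ ℝ, set c0 = k·coth(φ) and ξ = x − c0·t − ξ0, and define f(x,t) = 1 + e^{i k ξ + φ} and f'(x,t) = 1 + e^{i k ξ − φ}. Then for every real (x,t) one has f(x,t) ≠ 0, f'(x,t) ≠ 0, and i·(∂_x f' · f − f' · ∂_x f)/(f' · f) = k·sinh(φ)/(cos(kξ) + cosh(φ)); in particular i ∂_x log(f'/f) equals the traveling periodic wave of the Benjamin–Ono equation. -/

import Mathlib

lemma expDeriv_aux (a b1 b2 c : ℂ) (x : ℝ) :
    HasDerivAt (fun y : ℝ => Complex.exp (Complex.I * (a * (↑y - b1 - b2)) + c))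
      (Complex.exp (Complex.I * (a * (↑x - b1 - b2)) + c) * (Complex.I * a)) x := by
  have h0 : HasDerivAt (fun y : ℝ => (y : ℂ)) 1 x := Complex.ofRealCLM.hasDerivAt
  have h1 := ((((h0.sub_const b1).sub_const b2).const_mul a).const_mul Complex.I).add_const c
  have h2 := h1.cexp
  convert h2 using 1
  ring

lemma one_add_exp_mul_ne (θ r : ℝ) (hr0 : 0 ≤ r) (hr1 : r ≠ 1) :
    (1 : ℂ) + Complex.exp (↑θ * Complex.I) * r ≠ 0 := by
  intro h
  have h1 : Complex.exp (↑θ * Complex.I) * (r : ℂ) = -1 := by linear_combination h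
  have h2 := congrArg (‖·‖) h1
  simp only [norm_mul, Complex.norm_exp_ofReal_mul_I, Complex.norm_real, Real.norm_eq_abs, norm_neg,
    norm_one, one_mul] at h2
  rw [abs_of_nonneg hr0] at h2
  exact hr1 h2

/-- the Hirota quotient `i ∂_x log(f'/f)` of the one-periodic tau
functions equals the traveling periodic wave of the Benjamin–Ono equation. -/
theorem hirota_quotient_eq_periodic_wave (k φ ξ0 c0 : ℝ) (hk : 0 < k) (hφ : 0 < φ)
    (hc0 : c0 = k * Real.cosh φ / Real.sinh φ)
    (f f' : ℝ → ℝ → ℂ)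
    (hf : ∀ x t : ℝ, f x t =
      1 + Complex.exp (Complex.I * (k * (x - c0 * t - ξ0)) + φ))
    (hf' : ∀ x t : ℝ, f' x t =
      1 + Complex.exp (Complex.I * (k * (x - c0 * t - ξ0)) - φ)) :
    ∀ x t : ℝ,
      f x t ≠ 0 ∧ f' x t ≠ 0 ∧
      Complex.I * (deriv (fun y => f' y t) x * f x t - f' x t * deriv (fun y => f y t) x)
          / (f' x t * f x t)
        = ((k * Real.sinh φ / (Real.cos (k * (x - c0 * t - ξ0)) + Real.cosh φ) : ℝ) : ℂ) := by
  intro x t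
  set θ : ℝ := k * (x - c0 * t - ξ0) with hθ
  set E : ℂ := Complex.exp (↑θ * Complex.I) with hEdef
  set ep : ℝ := Real.exp φ with hepdef
  set em : ℝ := Real.exp (-φ) with hemdef
  have hep1 : ep ≠ 1 := by
    have := Real.add_one_le_exp φ
    simp only [hepdef]; intro h; nlinarith
  have hem1 : em ≠ 1 := by
    have : em < 1 := Real.exp_lt_one_iff.mpr (by linarith)
    exact ne_of_lt this
  have hargf : Complex.I * (↑k * (↑x - ↑c0 * ↑t - ↑ξ0)) + ↑φ = ↑θ * Complex.I + ↑φ := by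
    push_cast [hθ]; ring
  have hargf' : Complex.I * (↑k * (↑x - ↑c0 * ↑t - ↑ξ0)) - ↑φ = ↑θ * Complex.I + ↑(-φ) := by
    push_cast [hθ]; ring
  have hfe : f x t = 1 + E * ep := by
    rw [hf, hargf, Complex.exp_add, ← Complex.ofReal_exp]
  have hf'e : f' x t = 1 + E * em := by
    rw [hf', hargf', Complex.exp_add, ← Complex.ofReal_exp]
  have hfne : f x t ≠ 0 := by
    rw [hfe]; exact one_add_exp_mul_ne θ ep (Real.exp_pos φ).le hep1
  have hf'ne : f' x t ≠ 0 := by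
    rw [hf'e]; exact one_add_exp_mul_ne θ em (Real.exp_pos (-φ)).le hem1
  refine ⟨hfne, hf'ne, ?_⟩
  -- derivatives
  have hdf : deriv (fun y => f y t) x = E * ↑ep * (Complex.I * ↑k) := by
    have h := ((expDeriv_aux (k : ℂ) ((c0 : ℂ) * t) (ξ0 : ℂ) (φ : ℂ) x).const_add 1)
    have hfun : (fun y : ℝ => f y t)
        = fun y : ℝ => 1 + Complex.exp (Complex.I * (↑k * (↑y - ↑c0 * ↑t - ↑ξ0)) + ↑φ) := by
      funext y; exact hf y t
    rw [hfun, h.deriv, hargf, Complex.exp_add, ← Complex.ofReal_exp]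
  have hdf' : deriv (fun y => f' y t) x = E * ↑em * (Complex.I * ↑k) := by
    have h := ((expDeriv_aux (k : ℂ) ((c0 : ℂ) * t) (ξ0 : ℂ) (-(φ : ℂ)) x).const_add 1)
    have hfun : (fun y : ℝ => f' y t)
        = fun y : ℝ => 1 + Complex.exp (Complex.I * (↑k * (↑y - ↑c0 * ↑t - ↑ξ0)) + -(φ:ℂ)) := by
      funext y; rw [hf' y t]; ring_nf
    rw [hfun, h.deriv]
    have : Complex.I * (↑k * (↑x - ↑c0 * ↑t - ↑ξ0)) + -(φ:ℂ) = ↑θ * Complex.I + ↑(-φ) := by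
      push_cast [hθ]; ring
    rw [this, Complex.exp_add, ← Complex.ofReal_exp]
  rw [hdf, hdf', hfe, hf'e]
  -- right-hand side rewrites
  have hE0 : E ≠ 0 := Complex.exp_ne_zero _
  have h1 : (1 : ℂ) + E * em ≠ 0 := by
    rw [hf'e] at hf'ne; exact hf'ne
  have h2 : (1 : ℂ) + E * ep ≠ 0 := by
    rw [hfe] at hfne; exact hfne
  have hpm : (ep : ℂ) * em = 1 := by
    rw [hepdef, hemdef, ← Complex.ofReal_mul, ← Real.exp_add]
    simp
  have hcos : ((Real.cos θ : ℝ) : ℂ) = (E + E⁻¹) / 2 := by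
    rw [Complex.ofReal_cos]
    simp only [Complex.cos, hEdef]
    rw [neg_mul, Complex.exp_neg]
  have hden : (0 : ℝ) < Real.cos θ + Real.cosh φ := by
    have hco : (1 : ℝ) < Real.cosh φ := Real.one_lt_cosh.mpr (ne_of_gt hφ)
    have := Real.neg_one_le_cos θ
    linarith
  have hdenC : ((Real.cos θ + Real.cosh φ : ℝ) : ℂ) ≠ 0 := by
    exact_mod_cast ne_of_gt hden
  have hsinh : ((Real.sinh φ : ℝ) : ℂ) = ((ep : ℂ) - em) / 2 := by
    rw [Real.sinh_eq, hepdef, hemdef]; push_cast; ring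
  have hcosh : ((Real.cosh φ : ℝ) : ℂ) = ((ep : ℂ) + em) / 2 := by
    rw [Real.cosh_eq, hepdef, hemdef]; push_cast; ring
  have hnum : Complex.I * (E * ↑em * (Complex.I * ↑k) * (1 + E * ↑ep)
      - (1 + E * ↑em) * (E * ↑ep * (Complex.I * ↑k)))
      = ↑k * E * ((ep : ℂ) - em) := by
    linear_combination (↑k * E * ((em : ℂ) - ep)) * Complex.I_mul_I
  rw [show Complex.I * (E * ↑em * (Complex.I * ↑k) * (1 + E * ↑ep)
      - (1 + E * ↑em) * (E * ↑ep * (Complex.I * ↑k))) / ((1 + E * ↑em) * (1 + E * ↑ep))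
      = ↑k * E * ((ep : ℂ) - em) / ((1 + E * ↑em) * (1 + E * ↑ep)) from by rw [hnum]]
  rw [Complex.ofReal_div, Complex.ofReal_mul, hsinh, Complex.ofReal_add, hcos, hcosh]
  have hden2 : (E + E⁻¹) / 2 + ((ep : ℂ) + em) / 2 ≠ 0 := by
    rw [← hcos, ← hcosh, ← Complex.ofReal_add]
    exact hdenC
  have hEinv : E * E⁻¹ = 1 := mul_inv_cancel₀ hE0
  rw [div_eq_div_iff (mul_ne_zero h1 h2) hden2]
  linear_combination (↑k * ((ep:ℂ) - em) / 2) * hEinv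
    - (↑k * ((ep:ℂ) - em) * E ^ 2 / 2) * hpm
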